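/- For all integers p, q ≥ 2, let H₁ be the subgroup of F₂ generated by a^{p+1}·b⁻¹ and b^{q+1}. Then for every element w ∈ H₁, every maximal run of consecutive letters from the generator a (i.e. consecutive letters each equal to a or a⁻¹) in the reduced word of w has length at least 2; in particular, the reduced word of w never contains a single a or a⁻¹ surrounded only by letters b or b⁻¹ (or by the ends of the word). -/

import Mathlib

/-- The generator `a` of the free group on two generators. -/
def a : FreeGroup (Fin 2) := FreeGroup.of 0

/-- The generator `b` of the free group on two generators. -/
def b : FreeGroup (Fin 2) := FreeGroup.of 1

/-- The subgroup `H₁` of the free group on two generators, generated by `a^(p+1) * b⁻¹` and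
`b^(q+1)`: the image of the fundamental group of the second once-punctured torus. -/
def H₁ (p q : ℤ) : Subgroup (FreeGroup (Fin 2)) :=
  Subgroup.closure {a ^ (p + 1) * b⁻¹, b ^ (q + 1)}

namespace Stmt11Aux

abbrev Letter := (Fin 2) × Bool

def nc (x y : Letter) : Prop := ¬(x.1 = y.1 ∧ x.2 = !y.2)

lemma chain'_reduce (L : List Letter) : (FreeGroup.reduce L).Chain' nc := by
  induction L with
  | nil => exact List.isChain_nil
  | cons x L ih =>
    rw [FreeGroup.reduce.cons]
    rcases h : FreeGroup.reduce L with _ | ⟨hd, tl⟩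
    · exact List.isChain_singleton _
    · rw [h] at ih
      show List.Chain' nc (if x.1 = hd.1 ∧ x.2 = !hd.2 then tl else x :: hd :: tl)
      by_cases hc : x.1 = hd.1 ∧ x.2 = !hd.2
      · rw [if_pos hc]; exact ih.tail
      · rw [if_neg hc]; exact List.isChain_cons_cons.mpr ⟨hc, ih⟩

lemma reduce_eq_self {L : List Letter} (h : L.Chain' nc) : FreeGroup.reduce L = L := by
  induction L with
  | nil => rfl
  | cons x L ih =>
    rw [FreeGroup.reduce.cons, ih h.tail]
    rcases L with _ | ⟨y, t⟩
    · rfl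
    · have hnc := (List.isChain_cons_cons.mp h).1
      show (if x.1 = y.1 ∧ x.2 = !y.2 then t else x :: y :: t) = x :: y :: t
      rw [if_neg hnc]

def f (n : ℕ) (x : Letter) : List Letter := if x.1 = 0 then List.replicate n x else [x]

lemma mem_f {n : ℕ} {x z : Letter} (h : z ∈ f n x) : z = x := by
  unfold f at h
  split at h
  · exact List.eq_of_mem_replicate h
  · simpa using h

lemma f_ne_nil {n : ℕ} (hn : 1 ≤ n) (x : Letter) : f n x ≠ [] := by
  intro h
  have := congrArg List.length h
  unfold f at this
  split at this <;> simp at this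
  omega

def E (n : ℕ) (L : List Letter) : List Letter := L.flatMap (f n)

lemma head?_E {n : ℕ} (hn : 1 ≤ n) (x : Letter) (L : List Letter) :
    (E n (x :: L)).head? = some x := by
  have h1 := f_ne_nil hn x
  rcases hh : f n x with _ | ⟨z, t⟩
  · exact absurd hh h1
  · have : z ∈ f n x := by rw [hh]; exact List.mem_cons_self
    have hz := mem_f this
    simp [E, List.flatMap_cons, hh, hz]

lemma chain'_E {n : ℕ} (hn : 1 ≤ n) {L : List Letter} (h : L.Chain' nc) :
    (E n L).Chain' nc := by
  induction L with
  | nil => simp [E]; exact List.isChain_nil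
  | cons x L ih =>
    have hE : E n (x :: L) = f n x ++ E n L := by simp [E]
    rw [hE]; unfold List.Chain'; rw [List.isChain_append]
    refine ⟨?_, ih h.tail, ?_⟩
    · unfold f; split
      · exact List.isChain_replicate_of_rel n (by simp [nc])
      · simp
    · intro p hp q hq
      have hpx : p = x := mem_f (List.mem_of_mem_getLast? hp)
      rcases L with _ | ⟨y, L'⟩
      · simp [E] at hq
      · rw [head?_E hn] at hq
        have := (List.isChain_cons_cons.mp h).1
        rw [hpx, Option.mem_def] at *
        cases hq; exact this

lemma main {n : ℕ} (hn : 2 ≤ n) : ∀ (L x r : List Letter) (s : Bool),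
    E n L = x ++ ((0 : Fin 2), s) :: r →
    (∃ z ∈ x.getLast?, z.1 = 0) ∨ (∃ z ∈ r.head?, z.1 = 0) := by
  intro L
  induction L with
  | nil => intro x r s h; simp [E] at h
  | cons y L ih =>
    intro x r s h
    have hE : E n (y :: L) = f n y ++ E n L := by simp [E]
    rw [hE] at h
    rcases List.append_eq_append_iff.mp h with ⟨a', hx, hEL⟩ | ⟨c', hf, hr⟩
    · -- x = f n y ++ a', E n L = a' ++ (0,s) :: r
      rcases ih a' r s hEL with ⟨z, hz, hz0⟩ | hres
      · left
        refine ⟨z, ?_, hz0⟩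
        rcases a' with _ | _
        · simp at hz
        · rw [hx]; simp only [List.getLast?_append]
          rw [Option.mem_def] at hz ⊢
          simp [hz]
      · right; exact hres
    · -- f n y = x ++ c', (0,s) :: r = c' ++ E n L
      rcases c' with _ | ⟨d, c''⟩
      · -- c' = [], so f n y = x and (0,s)::r = E n L
        rcases ih [] r s (by simpa using hr.symm) with ⟨z, hz, _⟩ | hres
        · simp at hz
        · right; exact hres
      · -- d = (0,s), y = (0,s)
        have hd : d = ((0 : Fin 2), s) := by
          have := hr
          simp [List.cons_eq_cons] at this
          exact this.1.symm
        have hdy : d ∈ f n y := by rw [hf]; exact List.mem_append_right _ List.mem_cons_self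
        have hy : y = ((0 : Fin 2), s) := by rw [← hd]; exact (mem_f hdy).symm
        have hfy : f n y = List.replicate n y := by simp [f, hy]
        rcases x with _ | ⟨x0, xs⟩
        · -- x = [], then c'' head from replicate, r = c'' ++ E n L with c'' nonempty
          right
          have hrep : List.replicate n y = d :: c'' := by rw [← hfy, hf]; simp
          obtain ⟨m, hm⟩ : ∃ m, n = m + 2 := ⟨n - 2, by omega⟩
          subst hm
          have hc'' : c'' = List.replicate (m + 1) y := by
            rw [List.replicate_succ] at hrep
            exact (List.cons_eq_cons.mp hrep).2.symm
          have hrhead : r.head? = some y := by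
            have : r = c'' ++ E (m + 2) L := by
              have := hr
              simp [List.cons_eq_cons] at this
              exact this.2
            rw [this, hc'', List.replicate_succ]
            simp
          exact ⟨y, hrhead, by rw [hy]⟩
        · -- x nonempty, its last is in replicate, equals y
          left
          have hlast : x0 :: xs ≠ [] := by simp
          obtain ⟨z, hz⟩ := List.getLast?_isSome.mpr hlast |> Option.isSome_iff_exists.mp
          refine ⟨z, hz, ?_⟩
          have hzm : z ∈ (x0 :: xs) := List.mem_of_mem_getLast? hz
          have : z ∈ f n y := by rw [hf]; exact List.mem_append_left _ hzm
          rw [mem_f this, hy]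



noncomputable def φ (n : ℕ) : FreeGroup (Fin 2) →* FreeGroup (Fin 2) :=
  FreeGroup.lift (fun i : Fin 2 => if i = 0 then a ^ n else b)

lemma φ_of0 (n : ℕ) : φ n a = a ^ n := by simp [φ, a, FreeGroup.lift_apply_of]

lemma φ_of1 (n : ℕ) : φ n b = b := by simp [φ, b, FreeGroup.lift_apply_of]

lemma pow_a_eq (n : ℕ) : a ^ n = FreeGroup.mk (List.replicate n ((0 : Fin 2), true)) := by
  conv_lhs => rw [← FreeGroup.mk_toWord (x := a ^ n)]
  rw [a, FreeGroup.toWord_of_pow]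

lemma φ_mk_single (n : ℕ) (x : Letter) : φ n (FreeGroup.mk [x]) = FreeGroup.mk (f n x) := by
  obtain ⟨i, s⟩ := x
  fin_cases i <;> cases s <;> simp only [Fin.zero_eta, Fin.mk_one]
  · -- (0, false)
    have h : FreeGroup.mk [((0 : Fin 2), false)] = a⁻¹ := by
      rw [a, FreeGroup.of, FreeGroup.inv_mk]
      simp [FreeGroup.invRev]
    rw [h, map_inv, φ_of0, pow_a_eq, FreeGroup.inv_mk]
    simp [FreeGroup.invRev, f]
  · -- (0, true)
    have h : FreeGroup.mk [((0 : Fin 2), true)] = a := rfl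
    rw [h, φ_of0, pow_a_eq]
    simp [f]
  · -- (1, false)
    have h : FreeGroup.mk [((1 : Fin 2), false)] = b⁻¹ := by
      rw [b, FreeGroup.of, FreeGroup.inv_mk]
      simp [FreeGroup.invRev]
    rw [h, map_inv, φ_of1, b, FreeGroup.of, FreeGroup.inv_mk]
    simp [FreeGroup.invRev, f]
  · have h : FreeGroup.mk [((1 : Fin 2), true)] = b := rfl
    rw [h, φ_of1]
    simp [f, b, FreeGroup.of]

lemma φ_mk (n : ℕ) (L : List Letter) : φ n (FreeGroup.mk L) = FreeGroup.mk (E n L) := by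
  induction L with
  | nil => rw [← FreeGroup.one_eq_mk]; simp [E, ← FreeGroup.one_eq_mk]
  | cons x L ih =>
    have h1 : FreeGroup.mk (x :: L) = FreeGroup.mk [x] * FreeGroup.mk L := by
      rw [FreeGroup.mul_mk]; rfl
    have h2 : E n (x :: L) = f n x ++ E n L := by simp [E]
    rw [h1, map_mul, φ_mk_single, ih, FreeGroup.mul_mk, h2]

lemma H₁_le_range (p q : ℤ) (n : ℕ) (hpn : p + 1 = (n : ℤ)) :
    H₁ p q ≤ (φ n).range := by
  rw [H₁, Subgroup.closure_le]
  rintro x (rfl | rfl)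
  · exact ⟨a * b⁻¹, by rw [map_mul, map_inv, φ_of0, φ_of1, hpn, zpow_natCast]⟩
  · exact ⟨b ^ (q + 1), by rw [map_zpow, φ_of1]⟩

end Stmt11Aux

open Stmt11Aux

/-- For `p, q ≥ 2` and `w ∈ H₁`, every maximal run of consecutive `a`-letters in the reduced
word of `w` has length at least `2`: every occurrence of a letter `a^{±1}` has a neighbouring
letter which is also `a^{±1}`. -/
theorem stmt_11 (p q : ℤ) (hp : 2 ≤ p) (hq : 2 ≤ q) (w : FreeGroup (Fin 2))
    (hw : w ∈ H₁ p q) :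
    ∀ (l r : List (Fin 2 × Bool)) (s : Bool),
      w.toWord = l ++ ((0 : Fin 2), s) :: r →
      (∃ x ∈ l.getLast?, x.1 = 0) ∨ (∃ x ∈ r.head?, x.1 = 0) := by
  intro l r s h
  set n := (p + 1).toNat with hn
  have hn3 : 3 ≤ n := by omega
  have hpn : p + 1 = (n : ℤ) := by omega
  obtain ⟨g, hg⟩ := H₁_le_range p q n hpn hw
  have hword : w.toWord = E n g.toWord := by
    have h1 : w = FreeGroup.mk (E n g.toWord) := by
      rw [← hg]
      conv_lhs => rw [← FreeGroup.mk_toWord (x := g)]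
      exact φ_mk n g.toWord
    have hch : g.toWord.Chain' nc := by
      have := chain'_reduce g.toWord
      rwa [FreeGroup.reduce_toWord] at this
    rw [h1, FreeGroup.toWord_mk, reduce_eq_self (chain'_E (by omega) hch)]
  exact main (n := n) (by omega) g.toWord l r s (by rw [← hword]; exact h)
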